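/- arXiv:2410.22069 — 2 statements merged into one kernel-verified Lean document; each statement's English description precedes it below -/
import Mathlib

section
/- Let θ be a steepest-flow trajectory and t0 ≥ 0 with 𝓛(θ(t0)) < 1; assume θ(t) ≠ 0 and ∇𝓛(θ(t)) ≠ 0 for all t ≥ t0, and that s ↦ N(θ(s)) and s ↦ log γ̃(θ(s)) are differentiable on (t0, ∞). Fix t > t0 with q(t) := min_{1≤i≤m} y_i f(θ(t), x_i) > 0, and set θ̃ := q(t)^{−1/L} · θ(t). Then there exist λ_1, …, λ_m ≥ 0 such that, for every vector k̃ ∈ ℝ^p which is a subgradient at θ̃ of the convex function θ ↦ ½N(θ)² (i.e., ½N(θ')² ≥ ½N(θ̃)² + ⟨k̃, θ' − θ̃⟩ for all θ' ∈ ℝ^p), the following two inequalities hold with h := Σ_{i=1}^m λ_i y_i ∇_θ f(θ̃, x_i): (1) ½N_*(h)² − ½N_*(k̃)² − ⟨θ̃, h − k̃⟩ ≤ γ̃(θ(t0))^{−2/L} · (1 − A(t)); (2) Σ_{i=1}^m λ_i (y_i f(θ̃, x_i) − 1) ≤ m / (e · γ̃(θ(t0))^{2/L} · L · log(1/𝓛(θ(t)))).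 -/
open Filter

noncomputable section

abbrev E (p : ℕ) : Type := EuclideanSpace ℝ (Fin p)

/-- `N` is a norm on `ℝ^p`. -/
def IsNormOn {p : ℕ} (N : E p → ℝ) : Prop :=
  (∀ θ, 0 ≤ N θ) ∧ (∀ θ, N θ = 0 ↔ θ = 0) ∧
    (∀ (c : ℝ) (θ : E p), N (c • θ) = |c| * N θ) ∧
    ∀ θ θ' : E p, N (θ + θ') ≤ N θ + N θ'

/-- The dual norm `N_*(z) = sup {⟨z, v⟩ : N v ≤ 1}`. -/
def DualNorm {p : ℕ} (N : E p → ℝ) (z : E p) : ℝ :=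
  sSup ((fun v => (inner ℝ z v : ℝ)) '' {v | N v ≤ 1})

/-- The exponential loss `𝓛(θ) = Σ_i exp (-(y_i f(θ, x_i)))`. -/
def ExpLoss {p d m : ℕ} (f : E p → E d → ℝ) (x : Fin m → E d) (y : Fin m → ℝ)
    (θ : E p) : ℝ :=
  ∑ i, Real.exp (-(y i * f θ (x i)))

/-- A steepest-flow trajectory for the loss `𝓛` with respect to the norm `N`,
with derivative curve `θ'`. -/
def IsSteepestFlow {p : ℕ} (N : E p → ℝ) (𝓛 : E p → ℝ) (θ θ' : ℝ → E p) : Prop :=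
  ∀ t, (0:ℝ) ≤ t → HasDerivAt θ (θ' t) t ∧
    (inner ℝ (θ' t) (gradient 𝓛 (θ t)) : ℝ) = -(DualNorm N (gradient 𝓛 (θ t))) ^ 2 ∧
    N (θ' t) = DualNorm N (gradient 𝓛 (θ t))

/-- The soft margin `γ̃(θ) = -log 𝓛(θ) / N(θ)^L`. -/
def SoftMargin {p : ℕ} (N : E p → ℝ) (𝓛 : E p → ℝ) (L : ℝ) (θ : E p) : ℝ :=
  -Real.log (𝓛 θ) / N θ ^ L

/-- The hard margin `γ(θ) = (min_i y_i f(θ, x_i)) / N(θ)^L`. -/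
def HardMargin {p d m : ℕ} (N : E p → ℝ) (f : E p → E d → ℝ) (x : Fin m → E d)
    (y : Fin m → ℝ) (L : ℝ) (θ : E p) : ℝ :=
  (⨅ i, y i * f θ (x i)) / N θ ^ L

/-- The alignment `A(t) = ⟨θ(t)/N(θ(t)), -∇𝓛(θ(t))/N_*(∇𝓛(θ(t)))⟩`. -/
def FlowAlignment {p : ℕ} (N : E p → ℝ) (𝓛 : E p → ℝ) (θ : ℝ → E p) (t : ℝ) : ℝ :=
  inner ℝ ((N (θ t))⁻¹ • θ t) (-((DualNorm N (gradient 𝓛 (θ t)))⁻¹ • gradient 𝓛 (θ t)))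


variable {p : ℕ} {N : E p → ℝ}

theorem IsNormOn.zero (hN : IsNormOn N) : N 0 = 0 := (hN.2.1 0).mpr rfl

theorem IsNormOn.pos (hN : IsNormOn N) {θ : E p} (h : θ ≠ 0) : 0 < N θ :=
  lt_of_le_of_ne (hN.1 θ) (fun h' => h ((hN.2.1 θ).mp h'.symm))

theorem IsNormOn.neg (hN : IsNormOn N) (θ : E p) : N (-θ) = N θ := by
  have := hN.2.2.1 (-1) θ; simpa using this

theorem IsNormOn.abs_sub (hN : IsNormOn N) (a b : E p) : |N a - N b| ≤ N (a - b) := by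
  rw [abs_le]
  have h1 : N a ≤ N (a - b) + N b := by
    have := hN.2.2.2 (a - b) b; simpa using this
  have h2 : N b ≤ N (a - b) + N a := by
    have := hN.2.2.2 (b - a) a
    have hb : N (b - a) = N (a - b) := by rw [← hN.neg (a - b), neg_sub]
    simp at this; rw [hb] at this; linarith
  constructor <;> linarith

theorem IsNormOn.sum (hN : IsNormOn N) {ι : Type*} (s : Finset ι) (g : ι → E p) :
    N (∑ i ∈ s, g i) ≤ ∑ i ∈ s, N (g i) := by
  classical
  induction s using Finset.induction with
  | empty => simp [hN.zero]
  | insert a s h ih =>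
    rw [Finset.sum_insert h, Finset.sum_insert h]
    exact le_trans (hN.2.2.2 _ _) (by linarith)

theorem abs_coord_le (v : E p) (i : Fin p) : |v i| ≤ ‖v‖ := by
  rw [EuclideanSpace.norm_eq, ← Real.sqrt_sq_eq_abs]
  apply Real.sqrt_le_sqrt
  have : |v i| ^ 2 ≤ ∑ j, ‖v j‖ ^ 2 := by
    have := Finset.single_le_sum (f := fun j => ‖v j‖ ^ 2)
      (fun j _ => by positivity) (Finset.mem_univ i)
    simpa [sq_abs] using this
  simpa [sq_abs] using this

theorem IsNormOn.le_norm (hN : IsNormOn N) : ∃ C : ℝ, 0 ≤ C ∧ ∀ v : E p, N v ≤ C * ‖v‖ := by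
  set b := EuclideanSpace.basisFun (Fin p) ℝ
  refine ⟨∑ i, N (b i), Finset.sum_nonneg fun i _ => hN.1 _, fun v => ?_⟩
  have hv : v = ∑ i, v i • b i := by
    have := b.sum_repr v
    simp only [EuclideanSpace.basisFun_repr] at this
    exact this.symm
  have step1 : N v ≤ ∑ i, N (v i • b i) := by
    conv_lhs => rw [hv]
    exact hN.sum _ _
  calc N v ≤ ∑ i, N (v i • b i) := step1
    _ ≤ ∑ i, ‖v‖ * N (b i) := by
        refine Finset.sum_le_sum fun i _ => ?_
        rw [hN.2.2.1]
        exact mul_le_mul_of_nonneg_right (abs_coord_le v i) (hN.1 _)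
    _ = (∑ i, N (b i)) * ‖v‖ := by rw [Finset.sum_mul]; simp [mul_comm]

theorem IsNormOn.continuous (hN : IsNormOn N) : Continuous N := by
  obtain ⟨C, hC0, hC⟩ := hN.le_norm
  have key : ∀ a b : E p, dist (N a) (N b) ≤ C * dist a b := fun a b => by
    rw [Real.dist_eq, dist_eq_norm]
    exact le_trans (hN.abs_sub a b) (hC _)
  exact (lipschitzWith_iff_dist_le_mul.mpr (by
    intro a b
    calc dist (N a) (N b) ≤ C * dist a b := key a b
      _ ≤ C.toNNReal * dist a b := by
          apply mul_le_mul_of_nonneg_right _ dist_nonneg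
          simp [Real.coe_toNNReal C hC0])).continuous

theorem IsNormOn.norm_le (hN : IsNormOn N) (hp : 0 < p) :
    ∃ ε : ℝ, 0 < ε ∧ ∀ v : E p, ε * ‖v‖ ≤ N v := by
  have hsph : (Metric.sphere (0 : E p) 1).Nonempty := by
    refine ⟨EuclideanSpace.single ⟨0, hp⟩ (1:ℝ), ?_⟩
    simp [EuclideanSpace.norm_single]
  obtain ⟨v₀, hv₀, hmin⟩ := (isCompact_sphere (0 : E p) 1).exists_isMinOn hsph
    (hN.continuous.continuousOn)
  have hv₀n : ‖v₀‖ = 1 := by simpa using hv₀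
  have hv₀0 : v₀ ≠ 0 := by intro h; rw [h] at hv₀n; simp at hv₀n
  refine ⟨N v₀, hN.pos hv₀0, fun v => ?_⟩
  rcases eq_or_ne v 0 with rfl | hv
  · simp [hN.zero]
  · have hnv : (0:ℝ) < ‖v‖ := norm_pos_iff.mpr hv
    have hmem : ‖v‖⁻¹ • v ∈ Metric.sphere (0 : E p) 1 := by
      simp [norm_smul, abs_of_pos (inv_pos.mpr hnv), inv_mul_cancel₀ hnv.ne']
    have := hmin hmem
    have h2 : N (‖v‖⁻¹ • v) = ‖v‖⁻¹ * N v := by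
      rw [hN.2.2.1]; rw [abs_of_pos (inv_pos.mpr hnv)]
    simp only [IsMinOn, IsMinFilter] at hmin
    have h3 : N v₀ ≤ ‖v‖⁻¹ * N v := by rw [← h2]; exact this
    calc N v₀ * ‖v‖ ≤ (‖v‖⁻¹ * N v) * ‖v‖ := by
          exact mul_le_mul_of_nonneg_right h3 (le_of_lt hnv)
      _ = N v := by field_simp

theorem IsNormOn.dual_bddAbove (hN : IsNormOn N) (hp : 0 < p) (z : E p) :
    BddAbove ((fun v => (inner ℝ z v : ℝ)) '' {v | N v ≤ 1}) := by
  obtain ⟨ε, hε, hle⟩ := hN.norm_le hp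
  refine ⟨‖z‖ * ε⁻¹, fun r hr => ?_⟩
  obtain ⟨v, hv, rfl⟩ := hr
  have h1 : ‖v‖ ≤ ε⁻¹ := by
    have h2 : ε * ‖v‖ ≤ 1 := le_trans (hle v) hv
    calc ‖v‖ = ε * ‖v‖ / ε := by field_simp
      _ ≤ 1 / ε := by gcongr
      _ = ε⁻¹ := one_div ε
  calc (inner ℝ z v : ℝ) ≤ ‖z‖ * ‖v‖ := real_inner_le_norm z v
    _ ≤ ‖z‖ * ε⁻¹ := mul_le_mul_of_nonneg_left h1 (norm_nonneg z)

theorem IsNormOn.dual_nonempty (hN : IsNormOn N) (z : E p) :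
    ((fun v => (inner ℝ z v : ℝ)) '' {v | N v ≤ 1}).Nonempty :=
  ⟨0, ⟨0, by simp [hN.zero], by simp⟩⟩

theorem IsNormOn.le_dual (hN : IsNormOn N) (hp : 0 < p) {z v : E p} (hv : N v ≤ 1) :
    (inner ℝ z v : ℝ) ≤ DualNorm N z :=
  le_csSup (hN.dual_bddAbove hp z) ⟨v, hv, rfl⟩

theorem IsNormOn.dual_le (hN : IsNormOn N) {z : E p} {B : ℝ}
    (h : ∀ v, N v ≤ 1 → (inner ℝ z v : ℝ) ≤ B) : DualNorm N z ≤ B :=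
  csSup_le (hN.dual_nonempty z) (fun r ⟨v, hv, hr⟩ => hr ▸ h v hv)

theorem IsNormOn.dual_nonneg (hN : IsNormOn N) (hp : 0 < p) (z : E p) :
    0 ≤ DualNorm N z := by
  have := hN.le_dual hp (z := z) (v := 0) (by simp [hN.zero])
  simpa using this

theorem IsNormOn.inner_le_dual (hN : IsNormOn N) (hp : 0 < p) (z v : E p) :
    (inner ℝ z v : ℝ) ≤ DualNorm N z * N v := by
  rcases eq_or_ne v 0 with rfl | hv
  · simp [hN.zero]
  · have hNv : 0 < N v := hN.pos hv
    have hmem : N ((N v)⁻¹ • v) ≤ 1 := by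
      rw [hN.2.2.1, abs_of_pos (inv_pos.mpr hNv), inv_mul_cancel₀ hNv.ne']
    have h1 := hN.le_dual hp (z := z) hmem
    rw [real_inner_smul_right] at h1
    calc (inner ℝ z v : ℝ) = (N v) * ((N v)⁻¹ * inner ℝ z v) := by field_simp
      _ ≤ N v * DualNorm N z := mul_le_mul_of_nonneg_left h1 hNv.le
      _ = DualNorm N z * N v := mul_comm _ _

theorem IsNormOn.dual_smul (hN : IsNormOn N) (hp : 0 < p) {c : ℝ} (hc : 0 ≤ c) (z : E p) :
    DualNorm N (c • z) = c * DualNorm N z := by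
  rcases eq_or_lt_of_le hc with rfl | hc
  · simp only [zero_smul, zero_mul]
    refine le_antisymm (hN.dual_le fun v _ => by simp) (hN.dual_nonneg hp 0)
  · refine le_antisymm (hN.dual_le fun v hv => ?_) ?_
    · rw [real_inner_smul_left]
      exact mul_le_mul_of_nonneg_left (hN.le_dual hp hv) hc.le
    · rw [← le_div_iff₀' hc]
      refine hN.dual_le fun v hv => ?_
      rw [le_div_iff₀' hc, ← real_inner_smul_left]
      exact hN.le_dual hp hv

theorem IsNormOn.dual_neg (hN : IsNormOn N) (hp : 0 < p) (z : E p) :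
    DualNorm N (-z) = DualNorm N z := by
  have key : ∀ w : E p, DualNorm N (-w) ≤ DualNorm N w := by
    intro w
    refine hN.dual_le fun v hv => ?_
    have hv' : N (-v) ≤ 1 := by rw [hN.neg]; exact hv
    have := hN.le_dual hp (z := w) hv'
    rw [inner_neg_left]
    rw [inner_neg_right] at this
    linarith [this]
  exact le_antisymm (key z) (by simpa using key (-z))

theorem IsNormOn.dual_pos (hN : IsNormOn N) (hp : 0 < p) {z : E p} (hz : z ≠ 0) :
    0 < DualNorm N z := by
  have hNz : 0 < N z := hN.pos hz
  have hmem : N ((N z)⁻¹ • z) ≤ 1 := by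
    rw [hN.2.2.1, abs_of_pos (inv_pos.mpr hNz), inv_mul_cancel₀ hNz.ne']
  have h1 := hN.le_dual hp (z := z) hmem
  rw [real_inner_smul_right, real_inner_self_eq_norm_sq] at h1
  have hz' : (0:ℝ) < ‖z‖ := norm_pos_iff.mpr hz
  have : 0 < (N z)⁻¹ * ‖z‖ ^ 2 := by positivity
  linarith

section Grad
variable {d m : ℕ} {f : E p → E d → ℝ} {x : Fin m → E d} {y : Fin m → ℝ}
variable {L : ℝ}

/-- Gradient formula for the exponential loss. -/
theorem hasGradientAt_expLoss (hf : ∀ x' : E d, ContDiff ℝ 1 fun θ => f θ x') (w : E p) :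
    HasGradientAt (ExpLoss f x y)
      (∑ i, (-(y i * Real.exp (-(y i * f w (x i))))) • gradient (fun θ => f θ (x i)) w) w := by
  have hdi : ∀ i, HasGradientAt (fun θ => f θ (x i)) (gradient (fun θ => f θ (x i)) w) w :=
    fun i => (((hf (x i)).differentiable one_ne_zero) w).hasGradientAt
  have hterm : ∀ i : Fin m, HasFDerivAt (fun θ => Real.exp (-(y i * f θ (x i))))
      ((-(y i * Real.exp (-(y i * f w (x i))))) •
        (InnerProductSpace.toDual ℝ (E p) (gradient (fun θ => f θ (x i)) w))) w := by
    intro i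
    have h1 := ((hdi i).hasFDerivAt.const_mul (y i)).neg
    have h2 := h1.exp
    refine HasFDerivAt.congr_fderiv h2 ?_
    ext v
    simp [mul_comm, mul_assoc, mul_left_comm]
  have hsum := HasFDerivAt.sum (fun i (_ : i ∈ Finset.univ) => hterm i)
  rw [hasGradientAt_iff_hasFDerivAt, map_sum]
  simp_rw [map_smul]
  have hE : ExpLoss f x y = ∑ i, fun θ => Real.exp (-(y i * f θ (x i))) := by
    funext w; simp [ExpLoss, Finset.sum_apply]
  rw [hE]; exact hsum

/-- Euler's identity for positively L-homogeneous functions. -/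
theorem euler_identity (hL : 0 < L) (hf : ∀ x' : E d, ContDiff ℝ 1 fun θ => f θ x')
    (hhom : ∀ c : ℝ, 0 < c → ∀ (θ : E p) (x' : E d), f (c • θ) x' = c ^ L * f θ x')
    (θ₀ : E p) (x' : E d) :
    (inner ℝ θ₀ (gradient (fun w => f w x') θ₀) : ℝ) = L * f θ₀ x' := by
  set G := gradient (fun w => f w x') θ₀ with hG
  have hF : HasFDerivAt (fun w => f w x') (InnerProductSpace.toDual ℝ (E p) G) θ₀ :=
    ((((hf x').differentiable one_ne_zero) θ₀).hasGradientAt).hasFDerivAt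
  have hc : HasDerivAt (fun c : ℝ => c • θ₀) θ₀ 1 := by
    have := (hasDerivAt_id (1:ℝ)).smul_const θ₀
    simpa using this
  have hcomp : HasDerivAt (fun c : ℝ => f (c • θ₀) x') ((inner ℝ G θ₀ : ℝ)) 1 := by
    have hF' : HasFDerivAt (fun w => f w x') (InnerProductSpace.toDual ℝ (E p) G)
        ((fun c : ℝ => c • θ₀) 1) := by simpa using hF
    have := hF'.comp_hasDerivAt 1 hc
    exact this.congr_deriv (by simp [InnerProductSpace.toDual_apply_apply])
  have heq : (fun c : ℝ => f (c • θ₀) x') =ᶠ[nhds 1] (fun c : ℝ => c ^ L * f θ₀ x') := by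
    filter_upwards [Ioi_mem_nhds (zero_lt_one (α := ℝ))] with c hc
    exact hhom c hc θ₀ x'
  have hrpow : HasDerivAt (fun c : ℝ => c ^ L * f θ₀ x') (L * f θ₀ x') 1 := by
    have h1 : HasDerivAt (fun c : ℝ => c ^ L) (L * (1:ℝ) ^ (L - 1)) 1 :=
      Real.hasDerivAt_rpow_const (Or.inl one_ne_zero)
    have := h1.mul_const (f θ₀ x')
    simpa [Real.one_rpow] using this
  have h2 : HasDerivAt (fun c : ℝ => f (c • θ₀) x') (L * f θ₀ x') 1 :=
    hrpow.congr_of_eventuallyEq heq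
  have := hcomp.unique h2
  rw [real_inner_comm]
  exact this

/-- Homogeneity of the gradient. -/
theorem gradient_homogeneous (hL : 0 < L) (hf : ∀ x' : E d, ContDiff ℝ 1 fun θ => f θ x')
    (hhom : ∀ c : ℝ, 0 < c → ∀ (θ : E p) (x' : E d), f (c • θ) x' = c ^ L * f θ x')
    {c : ℝ} (hc : 0 < c) (θ₀ : E p) (x' : E d) :
    gradient (fun w => f w x') (c • θ₀) = (c ^ L / c) • gradient (fun w => f w x') θ₀ := by
  set G := gradient (fun w => f w x') θ₀ with hGdef
  set Gc := gradient (fun w => f w x') (c • θ₀) with hGcdef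
  have hF : HasFDerivAt (fun w => f w x') (InnerProductSpace.toDual ℝ (E p) G) θ₀ :=
    ((((hf x').differentiable one_ne_zero) θ₀).hasGradientAt).hasFDerivAt
  have hFc : HasFDerivAt (fun w => f w x') (InnerProductSpace.toDual ℝ (E p) Gc) (c • θ₀) :=
    ((((hf x').differentiable one_ne_zero) (c • θ₀)).hasGradientAt).hasFDerivAt
  have hsm : HasFDerivAt (fun w : E p => c • w) (c • ContinuousLinearMap.id ℝ (E p)) θ₀ :=
    (hasFDerivAt_id θ₀).const_smul c
  have h1 : HasFDerivAt (fun w => f (c • w) x')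
      ((InnerProductSpace.toDual ℝ (E p) Gc).comp (c • ContinuousLinearMap.id ℝ (E p))) θ₀ :=
    hFc.comp θ₀ hsm
  have h2 : HasFDerivAt (fun w => f (c • w) x')
      (c ^ L • InnerProductSpace.toDual ℝ (E p) G) θ₀ := by
    have hmul := hF.const_mul (c ^ L)
    have heq : (fun w => c ^ L * f w x') = (fun w => f (c • w) x') := by
      funext w; exact (hhom c hc w x').symm
    rw [heq] at hmul
    exact hmul
  have huniq := h1.unique h2
  refine ext_inner_right ℝ fun v => ?_
  have := congrFun (congrArg DFunLike.coe huniq) v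
  simp only [ContinuousLinearMap.comp_apply, ContinuousLinearMap.smul_apply,
    ContinuousLinearMap.id_apply, InnerProductSpace.toDual_apply_apply, smul_eq_mul] at this
  rw [real_inner_smul_right] at this
  rw [real_inner_smul_left]
  have hcne : c ≠ 0 := hc.ne'
  field_simp at this ⊢
  linarith [this]

end Grad

section Flow
variable {d m : ℕ} {f : E p → E d → ℝ} {x : Fin m → E d} {y : Fin m → ℝ} {L : ℝ}

theorem expLoss_pos (hm : 0 < m) (w : E p) : 0 < ExpLoss f x y w := by
  have : Nonempty (Fin m) := ⟨⟨0, hm⟩⟩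
  exact Finset.sum_pos (fun i _ => Real.exp_pos _) Finset.univ_nonempty

theorem exp_le_expLoss (i : Fin m) (w : E p) :
    Real.exp (-(y i * f w (x i))) ≤ ExpLoss f x y w :=
  Finset.single_le_sum (f := fun j => Real.exp (-(y j * f w (x j))))
    (fun j _ => (Real.exp_pos _).le) (Finset.mem_univ i)

theorem neg_log_le (hm : 0 < m) (i : Fin m) (w : E p) :
    -Real.log (ExpLoss f x y w) ≤ y i * f w (x i) := by
  have h1 := exp_le_expLoss (f := f) (x := x) (y := y) i w
  have h2 := Real.log_le_log (Real.exp_pos _) h1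
  rw [Real.log_exp] at h2
  linarith

/-- Key lower bound `L ⋅ (-log 𝓛 w) ⋅ 𝓛 w ≤ N_*(∇𝓛 w) ⋅ N w`. -/
theorem key_lower (hN : IsNormOn N) (hp : 0 < p) (hm : 0 < m) (hL : 0 < L)
    (hf : ∀ x' : E d, ContDiff ℝ 1 fun θ => f θ x')
    (hhom : ∀ c : ℝ, 0 < c → ∀ (θ : E p) (x' : E d), f (c • θ) x' = c ^ L * f θ x')
    (w : E p) :
    L * (-Real.log (ExpLoss f x y w)) * ExpLoss f x y w ≤
      DualNorm N (gradient (ExpLoss f x y) w) * N w := by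
  set g := -Real.log (ExpLoss f x y w) with hg
  have hgrad := (hasGradientAt_expLoss (x := x) (y := y) hf w).gradient
  have hinner : (inner ℝ w (-gradient (ExpLoss f x y) w) : ℝ) =
      L * ∑ i, Real.exp (-(y i * f w (x i))) * (y i * f w (x i)) := by
    rw [hgrad, inner_neg_right, inner_sum]
    simp_rw [real_inner_smul_right]
    rw [← Finset.sum_neg_distrib, Finset.mul_sum]
    congr 1; funext i
    rw [euler_identity hL hf hhom w (x i)]
    ring
  have hbound : L * g * ExpLoss f x y w ≤ (inner ℝ w (-gradient (ExpLoss f x y) w) : ℝ) := by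
    rw [hinner]
    have h1 : g * ExpLoss f x y w ≤ ∑ i, Real.exp (-(y i * f w (x i))) * (y i * f w (x i)) := by
      rw [ExpLoss, Finset.mul_sum]
      refine Finset.sum_le_sum fun i _ => ?_
      have := neg_log_le (f := f) (x := x) (y := y) hm i w
      have he := (Real.exp_pos (-(y i * f w (x i)))).le
      rw [mul_comm]
      exact mul_le_mul_of_nonneg_left (by rw [hg]; exact this) he
    calc L * g * ExpLoss f x y w = L * (g * ExpLoss f x y w) := by ring
      _ ≤ L * ∑ i, Real.exp (-(y i * f w (x i))) * (y i * f w (x i)) :=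
        mul_le_mul_of_nonneg_left h1 hL.le
  have h2 : (inner ℝ w (-gradient (ExpLoss f x y) w) : ℝ) ≤
      DualNorm N (gradient (ExpLoss f x y) w) * N w := by
    rw [real_inner_comm]
    calc (inner ℝ (-gradient (ExpLoss f x y) w) w : ℝ)
        ≤ DualNorm N (-gradient (ExpLoss f x y) w) * N w := hN.inner_le_dual hp _ _
      _ = DualNorm N (gradient (ExpLoss f x y) w) * N w := by rw [hN.dual_neg hp]
  linarith

end Flow

section Dyn
variable {d m : ℕ} {f : E p → E d → ℝ} {x : Fin m → E d} {y : Fin m → ℝ} {L : ℝ}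
variable {θ θ' : ℝ → E p}

/-- derivative of the loss along the flow -/
theorem loss_hasDerivAt (hf : ∀ x' : E d, ContDiff ℝ 1 fun θ => f θ x')
    (hflow : IsSteepestFlow N (ExpLoss f x y) θ θ') {s : ℝ} (hs : 0 ≤ s) :
    HasDerivAt (fun u => ExpLoss f x y (θ u))
      (-(DualNorm N (gradient (ExpLoss f x y) (θ s))) ^ 2) s := by
  have hG : HasGradientAt (ExpLoss f x y) (gradient (ExpLoss f x y) (θ s)) (θ s) := by
    have h := hasGradientAt_expLoss (x := x) (y := y) hf (θ s)
    rwa [h.gradient]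
  have hcomp := hG.hasFDerivAt.comp_hasDerivAt s (hflow s hs).1
  have heq : (InnerProductSpace.toDual ℝ (E p) (gradient (ExpLoss f x y) (θ s))) (θ' s) =
      -(DualNorm N (gradient (ExpLoss f x y) (θ s))) ^ 2 := by
    rw [InnerProductSpace.toDual_apply_apply, real_inner_comm]
    exact (hflow s hs).2.1
  rwa [heq] at hcomp

theorem loss_antitone (hf : ∀ x' : E d, ContDiff ℝ 1 fun θ => f θ x')
    (hflow : IsSteepestFlow N (ExpLoss f x y) θ θ') {a b : ℝ} (ha : 0 ≤ a) (hab : a ≤ b) :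
    ExpLoss f x y (θ b) ≤ ExpLoss f x y (θ a) := by
  have key : AntitoneOn (fun u => ExpLoss f x y (θ u)) (Set.Ici a) := by
    apply antitoneOn_of_deriv_nonpos (convex_Ici a)
    · intro s hs
      exact ((loss_hasDerivAt hf hflow (le_trans ha hs)).continuousAt).continuousWithinAt
    · intro s hs
      rw [interior_Ici] at hs
      exact (loss_hasDerivAt hf hflow (le_trans ha (le_of_lt hs))).differentiableAt.differentiableWithinAt
    · intro s hs
      rw [interior_Ici] at hs
      rw [(loss_hasDerivAt hf hflow (le_trans ha (le_of_lt hs))).deriv]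
      have := sq_nonneg (DualNorm N (gradient (ExpLoss f x y) (θ s)))
      linarith
  exact key (Set.self_mem_Ici) (Set.mem_Ici.mpr hab) hab

/-- bound on the derivative of `N ∘ θ` -/
theorem deriv_N_le (hN : IsNormOn N)
    (hflow : IsSteepestFlow N (ExpLoss f x y) θ θ') {t0 s : ℝ} (ht0 : 0 ≤ t0)
    (hdiff : DifferentiableAt ℝ (fun u => N (θ u)) s) (hs : t0 < s) :
    deriv (fun u => N (θ u)) s ≤ N (θ' s) := by
  have hθd := (hflow s (le_trans ht0 hs.le)).1
  have h1 : Tendsto (slope (fun u => N (θ u)) s) (nhdsWithin s (Set.Ioi s))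
      (nhds (deriv (fun u => N (θ u)) s)) := by
    have := hasDerivAt_iff_tendsto_slope.mp hdiff.hasDerivAt
    exact this.mono_left (nhdsWithin_mono s fun u hu => ne_of_gt hu)
  have h2 : Tendsto (fun u => N (slope θ s u)) (nhdsWithin s (Set.Ioi s)) (nhds (N (θ' s))) := by
    have hsl := hasDerivAt_iff_tendsto_slope.mp hθd
    have := (hN.continuous.tendsto (θ' s)).comp hsl
    exact this.mono_left (nhdsWithin_mono s fun u hu => ne_of_gt hu)
  have hev : ∀ᶠ u in nhdsWithin s (Set.Ioi s),
      slope (fun u => N (θ u)) s u ≤ N (slope θ s u) := by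
    filter_upwards [self_mem_nhdsWithin] with u hu
    have hu' : s < u := hu
    have hinv : (0:ℝ) < (u - s)⁻¹ := inv_pos.mpr (by linarith)
    rw [slope_def_field, slope]
    rw [hN.2.2.1, abs_of_pos hinv]
    have hub : N (θ u) - N (θ s) ≤ N (θ u - θ s) := by
      have := hN.abs_sub (θ u) (θ s)
      have := abs_le.mp this
      linarith [this.2]
    rw [div_eq_inv_mul]
    exact mul_le_mul_of_nonneg_left hub hinv.le
  exact le_of_tendsto_of_tendsto h1 h2 hev

end Dyn

section Mono
variable {d m : ℕ} {f : E p → E d → ℝ} {x : Fin m → E d} {y : Fin m → ℝ} {L : ℝ}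
variable {θ θ' : ℝ → E p}

theorem soft_mono (hN : IsNormOn N) (hp : 0 < p) (hm : 0 < m) (hL : 0 < L)
    (hf : ∀ x' : E d, ContDiff ℝ 1 fun θ => f θ x')
    (hhom : ∀ c : ℝ, 0 < c → ∀ (θ : E p) (x' : E d), f (c • θ) x' = c ^ L * f θ x')
    (hflow : IsSteepestFlow N (ExpLoss f x y) θ θ')
    {t0 : ℝ} (ht0 : 0 ≤ t0) (hsep : ExpLoss f x y (θ t0) < 1)
    (hθ0 : ∀ s, t0 ≤ s → θ s ≠ 0)
    (hNdiff : ∀ s ∈ Set.Ioi t0, DifferentiableAt ℝ (fun u => N (θ u)) s)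
    {t : ℝ} (ht : t0 < t) :
    SoftMargin N (ExpLoss f x y) L (θ t0) ≤ SoftMargin N (ExpLoss f x y) L (θ t) := by
  set 𝓛 := ExpLoss f x y with h𝓛
  set g : ℝ → ℝ := fun s => -Real.log (𝓛 (θ s)) with hgdef
  set n : ℝ → ℝ := fun s => N (θ s) with hndef
  have hLpos : ∀ w, 0 < 𝓛 w := expLoss_pos hm
  have hLlt1 : ∀ s, t0 ≤ s → 𝓛 (θ s) < 1 := fun s hs =>
    lt_of_le_of_lt (loss_antitone hf hflow ht0 hs) hsep
  have hgpos : ∀ s, t0 ≤ s → 0 < g s := fun s hs => by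
    simp only [hgdef, neg_pos]
    exact Real.log_neg (hLpos _) (hLlt1 s hs)
  have hnpos : ∀ s, t0 ≤ s → 0 < n s := fun s hs => hN.pos (hθ0 s hs)
  set φ : ℝ → ℝ := fun s => Real.log (g s) - L * Real.log (n s) with hφdef
  have hgC : ∀ s, t0 ≤ s → ContinuousAt g s := fun s hs => by
    have h1 := (loss_hasDerivAt hf hflow (le_trans ht0 hs)).continuousAt
    rw [← h𝓛] at h1
    exact (h1.log (hLpos (θ s)).ne').neg
  have hnC : ∀ s, t0 ≤ s → ContinuousAt n s := fun s hs =>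
    hN.continuous.continuousAt.comp ((hflow s (le_trans ht0 hs)).1.continuousAt)
  have hφC : ∀ s, t0 ≤ s → ContinuousAt φ s := fun s hs => by
    exact ((Real.continuousAt_log (hgpos s hs).ne').comp (hgC s hs)).sub
      (((Real.continuousAt_log (hnpos s hs).ne').comp (hnC s hs)).const_mul L)
  have hφd : ∀ s ∈ Set.Ioo t0 t, HasDerivAt φ
      ((DualNorm N (gradient 𝓛 (θ s)))^2 / 𝓛 (θ s) / g s - L * (deriv n s / n s)) s := by
    intro s hs
    have hs0 : t0 ≤ s := hs.1.le
    have hgd : HasDerivAt g ((DualNorm N (gradient 𝓛 (θ s)))^2 / 𝓛 (θ s)) s := by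
      have h1 := loss_hasDerivAt hf hflow (le_trans ht0 hs0)
      have h2 := (h1.log (hLpos (θ s)).ne').neg
      exact h2.congr_deriv (by simp [neg_div, h𝓛])
    have hnd : HasDerivAt n (deriv n s) s := (hNdiff s hs.1).hasDerivAt
    exact (hgd.log (hgpos s hs0).ne').sub ((hnd.log (hnpos s hs0).ne').const_mul L)
  have hφmono : MonotoneOn φ (Set.Icc t0 t) := by
    apply monotoneOn_of_deriv_nonneg (convex_Icc t0 t)
    · intro s hs
      exact (hφC s hs.1).continuousWithinAt
    · intro s hs
      rw [interior_Icc] at hs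
      exact (hφd s hs).differentiableAt.differentiableWithinAt
    · intro s hs
      rw [interior_Icc] at hs
      rw [(hφd s hs).deriv]
      set D := DualNorm N (gradient 𝓛 (θ s)) with hD
      have hkey := key_lower (N := N) (x := x) (y := y) hN hp hm hL hf hhom (θ s)
      have hn' : deriv n s ≤ D := by
        have h1 := deriv_N_le hN hflow ht0 (hNdiff s hs.1) hs.1
        rw [(hflow s (le_trans ht0 hs.1.le)).2.2] at h1
        exact h1
      have hDn : 0 ≤ D := hN.dual_nonneg hp _
      have hgs := hgpos s hs.1.le
      have hns := hnpos s hs.1.le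
      have hLs := hLpos (θ s)
      rw [← h𝓛] at hkey
      rw [sub_nonneg, div_div, ← mul_div_assoc]
      rw [div_le_div_iff₀ hns (by positivity)]
      -- L * deriv n s * (𝓛 (θ s) * g s) ≤ D ^ 2 * n s
      have hkey2 : L * g s * 𝓛 (θ s) ≤ D * n s := hkey
      rcases le_or_gt (deriv n s) 0 with hns' | hns'
      · have h1 : L * deriv n s ≤ 0 := mul_nonpos_of_nonneg_of_nonpos hL.le hns'
        have h2 : (0:ℝ) < 𝓛 (θ s) * g s := mul_pos hLs hgs
        have h3 : L * deriv n s * (𝓛 (θ s) * g s) ≤ 0 :=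
          mul_nonpos_of_nonpos_of_nonneg h1 h2.le
        have h4 : (0:ℝ) ≤ D ^ 2 * n s := by positivity
        linarith
      · have e1 : L * deriv n s * (𝓛 (θ s) * g s) = deriv n s * (L * g s * 𝓛 (θ s)) := by ring
        have e2 : deriv n s * (L * g s * 𝓛 (θ s)) ≤ deriv n s * (D * n s) :=
          mul_le_mul_of_nonneg_left hkey2 hns'.le
        have e3 : deriv n s * (D * n s) ≤ D * (D * n s) :=
          mul_le_mul_of_nonneg_right hn' (mul_nonneg hDn hns.le)
        have e4 : D * (D * n s) = D ^ 2 * n s := by ring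
        linarith
  have hφle : φ t0 ≤ φ t := hφmono (Set.left_mem_Icc.mpr ht.le)
    (Set.right_mem_Icc.mpr ht.le) ht.le
  have hlog : ∀ s, t0 ≤ s → Real.log (SoftMargin N 𝓛 L (θ s)) = φ s := by
    intro s hs
    have hns := hnpos s hs
    have hgs := hgpos s hs
    have h1 : SoftMargin N 𝓛 L (θ s) = g s / n s ^ L := rfl
    rw [h1, Real.log_div hgs.ne' (by positivity : (0:ℝ) < n s ^ L).ne', Real.log_rpow hns]
  have hpos0 : 0 < SoftMargin N 𝓛 L (θ t0) := by
    have h1 : SoftMargin N 𝓛 L (θ t0) = g t0 / n t0 ^ L := rfl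
    have h2 := hgpos t0 le_rfl
    have h3 := hnpos t0 le_rfl
    rw [h1]; positivity
  have hpost : 0 < SoftMargin N 𝓛 L (θ t) := by
    have h1 : SoftMargin N 𝓛 L (θ t) = g t / n t ^ L := rfl
    have h2 := hgpos t ht.le
    have h3 := hnpos t ht.le
    rw [h1]; positivity
  rw [← Real.log_le_log_iff hpos0 hpost, hlog t0 le_rfl, hlog t ht.le]
  exact hφle

theorem iInf_attained (hm : 0 < m) (zi : Fin m → ℝ) : ∃ i0 : Fin m, (⨅ i, zi i) = zi i0 := by
  have : Nonempty (Fin m) := ⟨⟨0, hm⟩⟩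
  obtain ⟨i0, hi0⟩ := Finite.exists_min zi
  exact ⟨i0, le_antisymm (ciInf_le (Finite.bddBelow_range zi) i0) (le_ciInf hi0)⟩

theorem q_le_zi (hm : 0 < m) (zi : Fin m → ℝ) (i : Fin m) : (⨅ j, zi j) ≤ zi i :=
  ciInf_le (Finite.bddBelow_range zi) i

end Mono

theorem log_inj_pos {a b : ℝ} (ha : 0 < a) (hb : 0 < b)
    (h : Real.log a = Real.log b) : a = b :=
  Real.log_injOn_pos (Set.mem_Ioi.mpr ha) (Set.mem_Ioi.mpr hb) h

theorem rpow_helper1 {q Nt L : ℝ} (hq : 0 < q) (hNt : 0 < Nt) (hL : 0 < L) :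
    (q / Nt ^ L) ^ (-(2:ℝ)/L) = (q ^ (-(1/L)) * Nt)^2 := by
  have hNtL : (0:ℝ) < Nt ^ L := Real.rpow_pos_of_pos hNt L
  have hc : (0:ℝ) < q ^ (-(1/L)) := Real.rpow_pos_of_pos hq _
  apply log_inj_pos (Real.rpow_pos_of_pos (div_pos hq hNtL) _) (by positivity)
  rw [Real.log_rpow (div_pos hq hNtL), Real.log_div hq.ne' hNtL.ne', Real.log_rpow hNt,
    Real.log_pow, Real.log_mul hc.ne' hNt.ne', Real.log_rpow hq]
  field_simp
  ring

theorem rpow_helper2 {q Nt L : ℝ} (hq : 0 < q) (hNt : 0 < Nt) (hL : 0 < L) :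
    (q / Nt ^ L) ^ ((2:ℝ)/L) = q ^ ((2:ℝ)/L) / Nt ^ 2 := by
  have hNtL : (0:ℝ) < Nt ^ L := Real.rpow_pos_of_pos hNt L
  have h2 : (0:ℝ) < q ^ ((2:ℝ)/L) := Real.rpow_pos_of_pos hq _
  apply log_inj_pos (Real.rpow_pos_of_pos (div_pos hq hNtL) _) (by positivity)
  rw [Real.log_rpow (div_pos hq hNtL), Real.log_div hq.ne' hNtL.ne', Real.log_rpow hNt,
    Real.log_div h2.ne' (by positivity : ((Nt:ℝ)^2) ≠ 0), Real.log_rpow hq, Real.log_pow]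
  field_simp
  ring

theorem rpow_helper3 {q L : ℝ} (hq : 0 < q) (hL : 0 < L) :
    (q ^ (-(1/L))) ^ L = q⁻¹ := by
  have hc : (0:ℝ) < q ^ (-(1/L)) := Real.rpow_pos_of_pos hq _
  apply log_inj_pos (Real.rpow_pos_of_pos hc _) (by positivity)
  rw [Real.log_rpow hc, Real.log_rpow hq, Real.log_inv]
  field_simp

theorem rpow_helper4 {q L : ℝ} (hq : 0 < q) (hL : 0 < L) :
    (q ^ (-(1/L)))^2 * q ^ ((2:ℝ)/L) = 1 := by
  have hc : (0:ℝ) < q ^ (-(1/L)) := Real.rpow_pos_of_pos hq _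
  have h2 : (0:ℝ) < q ^ ((2:ℝ)/L) := Real.rpow_pos_of_pos hq _
  apply log_inj_pos (by positivity) one_pos
  rw [Real.log_mul (by positivity) h2.ne', Real.log_pow, Real.log_rpow hq,
    Real.log_rpow hq, Real.log_one]
  field_simp
  push_cast; ring

set_option maxHeartbeats 2000000 in
theorem stmt_16 {p d m : ℕ} (hp : 0 < p) (hd : 0 < d) (hm : 0 < m)
    (x : Fin m → E d) (y : Fin m → ℝ) (hy : ∀ i, y i = 1 ∨ y i = -1)
    (L : ℝ) (hL : 0 < L) (f : E p → E d → ℝ)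
    (hf : ∀ x' : E d, ContDiff ℝ 1 fun θ => f θ x')
    (hhom : ∀ c : ℝ, 0 < c → ∀ (θ : E p) (x' : E d), f (c • θ) x' = c ^ L * f θ x')
    (N : E p → ℝ) (hN : IsNormOn N)
    (θ θ' : ℝ → E p) (hflow : IsSteepestFlow N (ExpLoss f x y) θ θ')
    (t0 : ℝ) (ht0 : 0 ≤ t0) (hsep : ExpLoss f x y (θ t0) < 1)
    (hθ0 : ∀ t, t0 ≤ t → θ t ≠ 0)
    (hg0 : ∀ t, t0 ≤ t → gradient (ExpLoss f x y) (θ t) ≠ 0)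
    (hNdiff : ∀ t ∈ Set.Ioi t0, DifferentiableAt ℝ (fun s => N (θ s)) t)
    (hγdiff : ∀ t ∈ Set.Ioi t0, DifferentiableAt ℝ
      (fun s => Real.log (SoftMargin N (ExpLoss f x y) L (θ s))) t)
    (t : ℝ) (ht : t0 < t) (hq : 0 < ⨅ i, y i * f (θ t) (x i)) :
    ∀ q : ℝ, q = ⨅ i, y i * f (θ t) (x i) →
    ∀ θtilde : E p, θtilde = (q ^ (-(1 / L))) • θ t →
      ∃ lam : Fin m → ℝ, (∀ i, 0 ≤ lam i) ∧
        ∀ ktilde : E p,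
          (∀ w : E p, (1/2) * (N w) ^ 2 ≥
            (1/2) * (N θtilde) ^ 2 + (inner ℝ ktilde (w - θtilde) : ℝ)) →
          ((1/2) * (DualNorm N
              (∑ i, lam i • (y i • gradient (fun w => f w (x i)) θtilde))) ^ 2 -
            (1/2) * (DualNorm N ktilde) ^ 2 -
            (inner ℝ θtilde
              ((∑ i, lam i • (y i • gradient (fun w => f w (x i)) θtilde)) -
                ktilde) : ℝ) ≤
            SoftMargin N (ExpLoss f x y) L (θ t0) ^ (-(2:ℝ) / L) *
              (1 - FlowAlignment N (ExpLoss f x y) θ t)) ∧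
          (∑ i, lam i * (y i * f θtilde (x i) - 1) ≤
            (m : ℝ) / (Real.exp 1 *
              SoftMargin N (ExpLoss f x y) L (θ t0) ^ ((2:ℝ) / L) * L *
              Real.log (1 / ExpLoss f x y (θ t)))) := by
  intro q hqe θtilde hθe
  have htt0 : t0 ≤ t := ht.le
  set zi : Fin m → ℝ := fun i => y i * f (θ t) (x i) with hzi
  have hq0 : 0 < q := hqe ▸ hq
  have hziq : ∀ i, q ≤ zi i := fun i => hqe ▸ q_le_zi hm zi i
  obtain ⟨i0, hi0⟩ := iInf_attained hm zi
  have hqz : q = zi i0 := hqe ▸ hi0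
  have hexpq : Real.exp (-q) ≤ ExpLoss f x y (θ t) := by
    rw [hqz]
    exact exp_le_expLoss (f := f) (x := x) (y := y) i0 (θ t)
  set c : ℝ := q ^ (-(1/L)) with hc
  have hc0 : 0 < c := Real.rpow_pos_of_pos hq0 _
  have hcL : c ^ L = q⁻¹ := rpow_helper3 hq0 hL
  set Nt : ℝ := N (θ t) with hNt
  have hNt0 : 0 < Nt := hN.pos (hθ0 t htt0)
  have hNtilde : N θtilde = c * Nt := by
    rw [hθe, hN.2.2.1, abs_of_pos hc0]
  set G : Fin m → E p := fun i => gradient (fun w => f w (x i)) (θ t) with hG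
  set gd : E p := gradient (ExpLoss f x y) (θ t) with hgd
  have hgd0 : gd ≠ 0 := hg0 t htt0
  set D : ℝ := DualNorm N gd with hD
  have hD0 : 0 < D := hN.dual_pos hp hgd0
  set κ : ℝ := c ^ L / c with hκ
  have hκ0 : 0 < κ := by rw [hκ, hcL]; positivity
  set β : ℝ := (c * Nt) / (κ * D) with hβ
  have hβ0 : 0 < β := by positivity
  refine ⟨fun i => β * Real.exp (-(zi i)), fun i => by positivity, ?_⟩
  intro ktilde hkt
  beta_reduce
  -- homogeneity of gradients
  have hGhom : ∀ i, gradient (fun w => f w (x i)) θtilde = κ • G i := by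
    intro i
    rw [hθe]
    exact gradient_homogeneous hL hf hhom hc0 (θ t) (x i)
  -- gradient of the loss
  have hgradL : gd = ∑ i, (-(y i * Real.exp (-(zi i)))) • G i := by
    simp only [hgd, hG, hzi]
    exact (hasGradientAt_expLoss (x := x) (y := y) hf (θ t)).gradient
  have hnegL : -gd = ∑ i, (y i * Real.exp (-(zi i))) • G i := by
    rw [hgradL, ← Finset.sum_neg_distrib]
    congr 1
    funext i
    rw [← neg_smul, neg_neg]
  -- the vector h
  have hh : (∑ i, (β * Real.exp (-(zi i))) • (y i • gradient (fun w => f w (x i)) θtilde))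
      = ((c * Nt) / D) • (-gd) := by
    rw [hnegL, Finset.smul_sum]
    congr 1
    funext i
    rw [hGhom i, smul_smul, smul_smul, smul_smul]
    congr 1
    rw [hβ]
    field_simp
  set hvec : E p := ∑ i, (β * Real.exp (-(zi i))) • (y i • gradient (fun w => f w (x i)) θtilde)
    with hhvec
  have hNh : DualNorm N hvec = c * Nt := by
    rw [hh, hN.dual_smul hp (by positivity) _, hN.dual_neg hp, ← hD]
    field_simp
  set A : ℝ := FlowAlignment N (ExpLoss f x y) θ t with hA
  have hIP : A = (Nt⁻¹ * D⁻¹) * (-(inner ℝ (θ t) gd : ℝ)) := by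
    rw [hA, FlowAlignment, ← hNt, ← hgd, ← hD]
    rw [inner_neg_right, real_inner_smul_left, real_inner_smul_right]
    ring
  have hinner_h : (inner ℝ θtilde hvec : ℝ) = (c * Nt)^2 * A := by
    rw [hh, hθe, real_inner_smul_left, real_inner_smul_right, inner_neg_right, hIP]
    field_simp
  have hA1 : A ≤ 1 := by
    have h1 : (inner ℝ (-(D⁻¹ • gd)) ((Nt)⁻¹ • θ t) : ℝ) ≤
        DualNorm N (-(D⁻¹ • gd)) * N ((Nt)⁻¹ • θ t) := hN.inner_le_dual hp _ _
    have h2 : DualNorm N (-(D⁻¹ • gd)) = 1 := by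
      rw [hN.dual_neg hp, hN.dual_smul hp (by positivity), ← hD]
      field_simp
    have h3 : N ((Nt)⁻¹ • θ t) = 1 := by
      rw [hN.2.2.1, abs_of_pos (by positivity : (0:ℝ) < Nt⁻¹), ← hNt]
      field_simp
    rw [h2, h3, mul_one] at h1
    calc A = (inner ℝ ((Nt)⁻¹ • θ t) (-(D⁻¹ • gd)) : ℝ) := by
          rw [hA, FlowAlignment, ← hNt, ← hgd, ← hD]
      _ = (inner ℝ (-(D⁻¹ • gd)) ((Nt)⁻¹ • θ t) : ℝ) := real_inner_comm _ _
      _ ≤ 1 := h1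
  -- soft margin facts
  have hsoftmono := soft_mono (N := N) hN hp hm hL hf hhom hflow ht0 hsep hθ0 hNdiff ht
  have hg0pos : 0 < -Real.log (ExpLoss f x y (θ t0)) := by
    have := expLoss_pos (f := f) (x := x) (y := y) hm (θ t0)
    have := Real.log_neg this hsep
    linarith
  have hgt : -Real.log (ExpLoss f x y (θ t)) ≤ q := by
    rw [hqz]
    exact neg_log_le (f := f) (x := x) (y := y) hm i0 (θ t)
  have hgtpos : 0 < -Real.log (ExpLoss f x y (θ t)) := by
    have h1 := loss_antitone hf hflow ht0 htt0
    have h2 := expLoss_pos (f := f) (x := x) (y := y) hm (θ t)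
    have := Real.log_neg h2 (lt_of_le_of_lt h1 hsep)
    linarith
  have hsoft0 : 0 < SoftMargin N (ExpLoss f x y) L (θ t0) := by
    have hn0 : 0 < N (θ t0) := hN.pos (hθ0 t0 le_rfl)
    rw [SoftMargin]
    positivity
  have hNtL : (0:ℝ) < N (θ t) ^ L := Real.rpow_pos_of_pos hNt0 L
  have hsoftt : SoftMargin N (ExpLoss f x y) L (θ t) ≤ q / Nt ^ L := by
    calc SoftMargin N (ExpLoss f x y) L (θ t)
        = (-Real.log (ExpLoss f x y (θ t))) / (N (θ t)) ^ L := rfl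
      _ ≤ q / (N (θ t)) ^ L := by gcongr
      _ = q / Nt ^ L := by rw [← hNt]
  have hchain : SoftMargin N (ExpLoss f x y) L (θ t0) ≤ q / Nt ^ L :=
    le_trans hsoftmono hsoftt
  have hC1 : (c * Nt)^2 ≤ SoftMargin N (ExpLoss f x y) L (θ t0) ^ (-(2:ℝ)/L) := by
    have hexp0 : -(2:ℝ)/L ≤ 0 := by
      apply div_nonpos_of_nonpos_of_nonneg <;> [norm_num; exact hL.le]
    have h1 := Real.rpow_le_rpow_of_nonpos hsoft0 hchain hexp0
    rw [rpow_helper1 hq0 hNt0 hL, ← hc] at h1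
    exact h1
  constructor
  · -- first inequality
    have hK0 : 0 ≤ DualNorm N ktilde := hN.dual_nonneg hp _
    have hik : (inner ℝ θtilde ktilde : ℝ) ≤ DualNorm N ktilde * (c * Nt) := by
      rw [real_inner_comm]
      calc (inner ℝ ktilde θtilde : ℝ) ≤ DualNorm N ktilde * N θtilde := hN.inner_le_dual hp _ _
        _ = DualNorm N ktilde * (c * Nt) := by rw [hNtilde]
    rw [inner_sub_right, hNh, hinner_h]
    have key1 : (1/2) * (c*Nt)^2 - (1/2) * (DualNorm N ktilde)^2 - (c*Nt)^2 * A
        + (inner ℝ θtilde ktilde : ℝ) ≤ (c*Nt)^2 * (1 - A) := by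
      nlinarith [hik, sq_nonneg (DualNorm N ktilde - c*Nt)]
    have key2 : (c*Nt)^2 * (1 - A) ≤
        SoftMargin N (ExpLoss f x y) L (θ t0) ^ (-(2:ℝ)/L) * (1 - A) :=
      mul_le_mul_of_nonneg_right hC1 (by linarith)
    linarith
  · -- second inequality
    have hlog1 : Real.log (1 / ExpLoss f x y (θ t)) = -Real.log (ExpLoss f x y (θ t)) := by
      rw [one_div, Real.log_inv]
    have hfθ : ∀ i, y i * f θtilde (x i) = q⁻¹ * zi i := by
      intro i
      rw [hθe, hhom c hc0, hcL]
      simp only [hzi]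
      ring
    have hterm : ∀ i : Fin m, (β * Real.exp (-(zi i))) * (y i * f θtilde (x i) - 1)
        ≤ β * (Real.exp (-q) / (Real.exp 1 * q)) := by
      intro i
      rw [hfθ i]
      have hz := hziq i
      have hu : Real.exp (-(zi i)) * (zi i - q) ≤ Real.exp (-q) / Real.exp 1 := by
        have h1 : zi i - q ≤ Real.exp (zi i - q - 1) := by
          have := Real.add_one_le_exp (zi i - q - 1); linarith
        calc Real.exp (-(zi i)) * (zi i - q)
            ≤ Real.exp (-(zi i)) * Real.exp (zi i - q - 1) :=
              mul_le_mul_of_nonneg_left h1 (Real.exp_pos _).le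
          _ = Real.exp (-q - 1) := by rw [← Real.exp_add]; ring_nf
          _ = Real.exp (-q) / Real.exp 1 := by rw [Real.exp_sub]
      have heq1 : q⁻¹ * zi i - 1 = (zi i - q)/q := by field_simp
      rw [heq1]
      calc β * Real.exp (-(zi i)) * ((zi i - q)/q)
          = β * ((Real.exp (-(zi i)) * (zi i - q))/q) := by ring
        _ ≤ β * ((Real.exp (-q)/Real.exp 1)/q) := by
            apply mul_le_mul_of_nonneg_left _ hβ0.le
            gcongr
        _ = β * (Real.exp (-q)/(Real.exp 1 * q)) := by rw [div_div]
    have hsum : (∑ i, (β * Real.exp (-(zi i))) * (y i * f θtilde (x i) - 1))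
        ≤ (m:ℝ) * (β * (Real.exp (-q)/(Real.exp 1 * q))) := by
      calc (∑ i, (β * Real.exp (-(zi i))) * (y i * f θtilde (x i) - 1))
          ≤ ∑ _i : Fin m, β * (Real.exp (-q)/(Real.exp 1 * q)) :=
            Finset.sum_le_sum (fun i _ => hterm i)
        _ = (m:ℝ) * (β * (Real.exp (-q)/(Real.exp 1 * q))) := by
            rw [Finset.sum_const, Finset.card_univ, Fintype.card_fin, nsmul_eq_mul]
    have hS2pos : 0 < SoftMargin N (ExpLoss f x y) L (θ t0) ^ ((2:ℝ)/L) :=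
      Real.rpow_pos_of_pos hsoft0 _
    have hS2le : SoftMargin N (ExpLoss f x y) L (θ t0) ^ ((2:ℝ)/L)
        ≤ q ^ ((2:ℝ)/L) / Nt^2 := by
      have h1 := Real.rpow_le_rpow hsoft0.le hchain (by positivity : (0:ℝ) ≤ 2/L)
      rwa [rpow_helper2 hq0 hNt0 hL] at h1
    have hkeyt := key_lower (N := N) (x := x) (y := y) hN hp hm hL hf hhom (θ t)
    rw [← hgd, ← hD, ← hNt] at hkeyt
    have hrq : (0:ℝ) < q ^ ((2:ℝ)/L) := Real.rpow_pos_of_pos hq0 _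
    have hc2r : c^2 * q ^ ((2:ℝ)/L) = 1 := by rw [hc]; exact rpow_helper4 hq0 hL
    have hβeq : β = c^2 * q * Nt / D := by
      rw [hβ, hκ, hcL]
      field_simp
    have hgt2 := hgtpos
    have hLt0 := expLoss_pos (f := f) (x := x) (y := y) hm (θ t)
    have core2 : β * Real.exp (-q) * (SoftMargin N (ExpLoss f x y) L (θ t0) ^ ((2:ℝ)/L))
        * (L * (-Real.log (ExpLoss f x y (θ t)))) ≤ q := by
      have hrw : β * Real.exp (-q) * (SoftMargin N (ExpLoss f x y) L (θ t0) ^ ((2:ℝ)/L))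
          * (L * (-Real.log (ExpLoss f x y (θ t))))
          = (c^2 * q * Nt * (Real.exp (-q) * ((SoftMargin N (ExpLoss f x y) L (θ t0) ^ ((2:ℝ)/L))
            * (L * (-Real.log (ExpLoss f x y (θ t))))))) / D := by
        rw [hβeq]; ring
      rw [hrw, div_le_iff₀ hD0]
      have hLg0 : 0 ≤ L * (-Real.log (ExpLoss f x y (θ t))) := by positivity
      calc c^2 * q * Nt * (Real.exp (-q) * ((SoftMargin N (ExpLoss f x y) L (θ t0) ^ ((2:ℝ)/L))
            * (L * (-Real.log (ExpLoss f x y (θ t))))))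
          ≤ c^2 * q * Nt * (ExpLoss f x y (θ t) * ((q ^ ((2:ℝ)/L) / Nt^2)
            * (L * (-Real.log (ExpLoss f x y (θ t)))))) := by
            apply mul_le_mul_of_nonneg_left _ (by positivity : (0:ℝ) ≤ c^2 * q * Nt)
            apply mul_le_mul hexpq
              (mul_le_mul_of_nonneg_right hS2le hLg0)
              (by positivity) hLt0.le
        _ = (c^2 * q ^ ((2:ℝ)/L)) * (q / Nt)
            * (L * (-Real.log (ExpLoss f x y (θ t))) * ExpLoss f x y (θ t)) := by
            field_simp
        _ = (q / Nt) * (L * (-Real.log (ExpLoss f x y (θ t))) * ExpLoss f x y (θ t)) := by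
            rw [hc2r]; ring
        _ ≤ (q / Nt) * (D * Nt) :=
            mul_le_mul_of_nonneg_left hkeyt (by positivity)
        _ = q * D := by field_simp
    have hmain : (m:ℝ) * (β * (Real.exp (-q)/(Real.exp 1 * q)))
        ≤ (m : ℝ) / (Real.exp 1 * SoftMargin N (ExpLoss f x y) L (θ t0) ^ ((2:ℝ)/L) * L *
            (-Real.log (ExpLoss f x y (θ t)))) := by
      rw [div_eq_mul_one_div (m:ℝ)]
      apply mul_le_mul_of_nonneg_left _ (Nat.cast_nonneg m)
      have he1 : (0:ℝ) < Real.exp 1 := Real.exp_pos 1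
      rw [mul_div_assoc', div_le_div_iff₀ (by positivity) (by positivity)]
      calc β * Real.exp (-q) * (Real.exp 1 * SoftMargin N (ExpLoss f x y) L (θ t0) ^ ((2:ℝ)/L)
            * L * (-Real.log (ExpLoss f x y (θ t))))
          = Real.exp 1 * (β * Real.exp (-q) * (SoftMargin N (ExpLoss f x y) L (θ t0) ^ ((2:ℝ)/L))
            * (L * (-Real.log (ExpLoss f x y (θ t))))) := by ring
        _ ≤ Real.exp 1 * q := mul_le_mul_of_nonneg_left core2 he1.le
        _ = 1 * (Real.exp 1 * q) := by ring
    rw [hlog1]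
    exact le_trans hsum hmain
end
end

section
/- For every θ ∈ ℝ^p with θ ≠ 0 it holds that N_*(∇𝓛(θ)) ≥ (L / N(θ)) · 𝓛(θ) · log(1/𝓛(θ)). -/
open Filter

noncomputable section

def Fsyn (p : ℕ) : Type := EuclideanSpace ℝ (Fin p)
instance {p : ℕ} : AddCommGroup (Fsyn p) := inferInstanceAs (AddCommGroup (EuclideanSpace ℝ (Fin p)))
instance {p : ℕ} : Module ℝ (Fsyn p) := inferInstanceAs (Module ℝ (EuclideanSpace ℝ (Fin p)))
instance {p : ℕ} : FiniteDimensional ℝ (Fsyn p) :=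
  inferInstanceAs (FiniteDimensional ℝ (EuclideanSpace ℝ (Fin p)))

lemma exists_norm_bound {p : ℕ} (N : E p → ℝ) (hN : IsNormOn N) :
    ∃ C : ℝ, ∀ v : E p, N v ≤ 1 → ‖v‖ ≤ C := by
  obtain ⟨h0, heq, hsmul, hadd⟩ := hN
  letI : NormedAddCommGroup (Fsyn p) := AddGroupNorm.toNormedAddCommGroup
    { toFun := N
      map_zero' := (heq 0).mpr rfl
      add_le' := hadd
      neg' := fun v => by
        exact (congrArg N (neg_one_smul ℝ (show E p from v))).symm.trans
          ((hsmul (-1) v).trans (by simp))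
      eq_zero_of_map_eq_zero' := fun v h => (heq v).mp h }
  letI : NormedSpace ℝ (Fsyn p) := ⟨fun c v => le_of_eq (hsmul c v)⟩
  let g : Fsyn p →L[ℝ] E p := LinearMap.toContinuousLinearMap (LinearMap.id : Fsyn p →ₗ[ℝ] E p)
  refine ⟨‖g‖, fun v hv => ?_⟩
  calc ‖v‖ ≤ ‖g‖ * N v := g.le_opNorm v
    _ ≤ ‖g‖ * 1 := mul_le_mul_of_nonneg_left hv (norm_nonneg g)
    _ = ‖g‖ := mul_one _

lemma euler_aux {p : ℕ} {L : ℝ} (g : E p → ℝ) (hg : ContDiff ℝ 1 g)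
    (hhom : ∀ c : ℝ, 0 < c → ∀ θ : E p, g (c • θ) = c ^ L * g θ) (θ : E p) :
    fderiv ℝ g θ θ = L * g θ := by
  have hs : HasDerivAt (fun c : ℝ => c • θ) θ 1 := by
    simpa using (hasDerivAt_id (1:ℝ)).smul_const θ
  have hgd : HasFDerivAt g (fderiv ℝ g θ) ((1:ℝ) • θ) := by
    rw [one_smul]; exact (hg.differentiable one_ne_zero θ).hasFDerivAt
  have h1 : HasDerivAt (fun c : ℝ => g (c • θ)) (fderiv ℝ g θ θ) 1 :=
    hgd.comp_hasDerivAt 1 hs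
  have h2 : HasDerivAt (fun c : ℝ => c ^ L * g θ) (L * g θ) 1 := by
    have := (Real.hasDerivAt_rpow_const (x := (1:ℝ)) (p := L)
      (Or.inl one_ne_zero)).mul_const (g θ)
    simpa using this
  have heqv : (fun c : ℝ => c ^ L * g θ) =ᶠ[nhds 1] fun c => g (c • θ) := by
    filter_upwards [eventually_gt_nhds zero_lt_one] with c hc
    exact (hhom c hc θ).symm
  exact h1.unique (h2.congr_of_eventuallyEq heqv.symm)

theorem stmt_17 {p d m : ℕ} (hp : 0 < p) (hd : 0 < d) (hm : 0 < m)
    (x : Fin m → E d) (y : Fin m → ℝ) (hy : ∀ i, y i = 1 ∨ y i = -1)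
    (L : ℝ) (hL : 0 < L) (f : E p → E d → ℝ)
    (hf : ∀ x' : E d, ContDiff ℝ 1 fun θ => f θ x')
    (hhom : ∀ c : ℝ, 0 < c → ∀ (θ : E p) (x' : E d), f (c • θ) x' = c ^ L * f θ x')
    (N : E p → ℝ) (hN : IsNormOn N)
    (θ : E p) (hθ : θ ≠ 0) :
    DualNorm N (gradient (ExpLoss f x y) θ) ≥
      (L / N θ) * ExpLoss f x y θ * Real.log (1 / ExpLoss f x y θ) := by
  obtain ⟨h0, heqz, hsmul, hadd⟩ := hN
  have hNθ : 0 < N θ := lt_of_le_of_ne (h0 θ) (fun h => hθ ((heqz θ).mp h.symm))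
  set a := ExpLoss f x y θ with ha_def
  have ha : 0 < a := by
    apply Finset.sum_pos (fun i _ => Real.exp_pos _)
    haveI : Nonempty (Fin m) := Fin.pos_iff_nonempty.mp hm
    exact Finset.univ_nonempty
  -- derivative data
  set Di : Fin m → (E p →L[ℝ] ℝ) := fun i => fderiv ℝ (fun θ' => f θ' (x i)) θ with hDi
  set D : E p →L[ℝ] ℝ :=
    ∑ i, Real.exp (-(y i * f θ (x i))) • (-(y i • Di i)) with hD_def
  have hD : HasFDerivAt (ExpLoss f x y) D θ := by
    apply HasFDerivAt.fun_sum
    intro i _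
    have hi : HasFDerivAt (fun θ' => f θ' (x i)) (Di i) θ :=
      (((hf (x i)).differentiable one_ne_zero) θ).hasFDerivAt
    exact ((hi.const_mul (y i)).neg).exp
  have hGrad : HasGradientAt (ExpLoss f x y) ((InnerProductSpace.toDual ℝ (E p)).symm D) θ :=
    hD.hasGradientAt
  have hgrad_eq : gradient (ExpLoss f x y) θ = (InnerProductSpace.toDual ℝ (E p)).symm D :=
    hGrad.gradient
  have hinner : ∀ v : E p, (inner ℝ (gradient (ExpLoss f x y) θ) v : ℝ) = D v := by
    intro v; rw [hgrad_eq]; exact InnerProductSpace.toDual_symm_apply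
  -- Euler
  have heuler : ∀ i, Di i θ = L * f θ (x i) := fun i =>
    euler_aux (fun θ' => f θ' (x i)) (hf (x i)) (fun c hc θ' => hhom c hc θ' (x i)) θ
  -- each margin bound
  have hmargin : ∀ i : Fin m, -Real.log a ≤ y i * f θ (x i) := by
    intro i
    have hle : Real.exp (-(y i * f θ (x i))) ≤ a :=
      Finset.single_le_sum (f := fun j => Real.exp (-(y j * f θ (x j))))
        (fun j _ => le_of_lt (Real.exp_pos _)) (Finset.mem_univ i)
    have := Real.log_le_log (Real.exp_pos _) hle
    rw [Real.log_exp] at this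
    linarith
  -- compute D (-θ)
  have hDval : D (-θ) = ∑ i, Real.exp (-(y i * f θ (x i))) * (y i * (L * f θ (x i))) := by
    rw [hD_def]
    simp only [ContinuousLinearMap.sum_apply, ContinuousLinearMap.smul_apply,
      ContinuousLinearMap.neg_apply, map_neg, smul_eq_mul, mul_neg, neg_neg, neg_mul]
    rw [← Finset.sum_neg_distrib]
    refine Finset.sum_congr rfl fun i _ => ?_
    rw [heuler i]; ring
  have hterm : ∀ i : Fin m, L * (-Real.log a * Real.exp (-(y i * f θ (x i)))) ≤
      Real.exp (-(y i * f θ (x i))) * (y i * (L * f θ (x i))) := by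
    intro i
    have he := Real.exp_pos (-(y i * f θ (x i)))
    calc L * (-Real.log a * Real.exp (-(y i * f θ (x i))))
        = (L * Real.exp (-(y i * f θ (x i)))) * (-Real.log a) := by ring
      _ ≤ (L * Real.exp (-(y i * f θ (x i)))) * (y i * f θ (x i)) :=
          mul_le_mul_of_nonneg_left (hmargin i) (mul_nonneg hL.le he.le)
      _ = Real.exp (-(y i * f θ (x i))) * (y i * (L * f θ (x i))) := by ring
  have hsum_eq : ∑ i, L * (-Real.log a * Real.exp (-(y i * f θ (x i)))) =
      L * (-Real.log a * a) := by
    simp only [← Finset.mul_sum]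
    rw [ha_def]; rfl
  have hDge : L * ((-Real.log a) * a) ≤ D (-θ) := by
    rw [hDval, ← hsum_eq]
    exact Finset.sum_le_sum fun i _ => hterm i
  -- candidate vector
  set v : E p := (N θ)⁻¹ • (-θ) with hv_def
  have hNv : N v = 1 := by
    rw [hv_def, hsmul]
    have : N (-θ) = N θ := by
      have := hsmul (-1) θ; simpa using this
    rw [this, abs_of_pos (inv_pos.mpr hNθ), inv_mul_cancel₀ (ne_of_gt hNθ)]
  have hmem : (inner ℝ (gradient (ExpLoss f x y) θ) v : ℝ) ∈
      ((fun w => (inner ℝ (gradient (ExpLoss f x y) θ) w : ℝ)) '' {w | N w ≤ 1}) :=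
    ⟨v, le_of_eq hNv, rfl⟩
  obtain ⟨C, hC⟩ := exists_norm_bound N ⟨h0, heqz, hsmul, hadd⟩
  have hbdd : BddAbove ((fun w => (inner ℝ (gradient (ExpLoss f x y) θ) w : ℝ)) '' {w | N w ≤ 1}) := by
    refine ⟨‖gradient (ExpLoss f x y) θ‖ * C, ?_⟩
    rintro r ⟨w, hw, rfl⟩
    calc (inner ℝ (gradient (ExpLoss f x y) θ) w : ℝ)
        ≤ ‖gradient (ExpLoss f x y) θ‖ * ‖w‖ := real_inner_le_norm _ _
      _ ≤ ‖gradient (ExpLoss f x y) θ‖ * C :=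
          mul_le_mul_of_nonneg_left (hC w hw) (norm_nonneg _)
  have hsup : (inner ℝ (gradient (ExpLoss f x y) θ) v : ℝ) ≤
      DualNorm N (gradient (ExpLoss f x y) θ) := le_csSup hbdd hmem
  have hinner_v : (inner ℝ (gradient (ExpLoss f x y) θ) v : ℝ) = (N θ)⁻¹ * D (-θ) := by
    rw [hv_def, real_inner_smul_right, hinner]
  have hlog : Real.log (1 / a) = -Real.log a := by
    rw [one_div, Real.log_inv]
  have hfinal : (L / N θ) * a * Real.log (1 / a) ≤ (N θ)⁻¹ * D (-θ) := by
    rw [hlog]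
    have h1 : (N θ)⁻¹ * (L * ((-Real.log a) * a)) ≤ (N θ)⁻¹ * D (-θ) :=
      mul_le_mul_of_nonneg_left hDge (inv_nonneg.mpr hNθ.le)
    calc (L / N θ) * a * (-Real.log a) = (N θ)⁻¹ * (L * ((-Real.log a) * a)) := by
          rw [div_eq_mul_inv]; ring
      _ ≤ (N θ)⁻¹ * D (-θ) := h1
  calc (L / N θ) * a * Real.log (1 / a) ≤ (N θ)⁻¹ * D (-θ) := hfinal
    _ = (inner ℝ (gradient (ExpLoss f x y) θ) v : ℝ) := hinner_v.symm
    _ ≤ DualNorm N (gradient (ExpLoss f x y) θ) := hsup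
end
end
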